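/- For all natural numbers p ≥ 1 and q ≥ 1, the number of (p,q)-shuffles having exactly one index responsible for an inversion equals p. -/

import Mathlib

def IsShuffle (p q : ℕ) (π : Equiv.Perm (Fin (p + q))) : Prop :=
  (∀ i j : Fin (p + q), i < j → (j : ℕ) < p → π i < π j) ∧
  (∀ i j : Fin (p + q), p ≤ (i : ℕ) → i < j → π i < π j)

def Responsible (p q : ℕ) (π : Equiv.Perm (Fin (p + q))) (j : Fin (p + q)) : Prop :=
  p ≤ (j : ℕ) ∧ ∃ i : Fin (p + q), (i : ℕ) < p ∧ π j < π i

namespace ShuffleAux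

open Finset

lemma card_lt {n : ℕ} (π : Equiv.Perm (Fin n)) (j : Fin n) :
    #(univ.filter (fun t => π t < π j)) = (π j : ℕ) := by
  rw [← Fin.card_Iio (b := π j)]
  apply Finset.card_nbij' (i := fun t => π t) (j := fun v => π.symm v) <;>
    simp [Finset.mem_Iio, Set.MapsTo, Set.LeftInvOn, Set.RightInvOn, Set.EqOn]

def g (p k j : ℕ) : ℕ := if j = p then k else if k ≤ j ∧ j < p then j + 1 else j

def g' (p k j : ℕ) : ℕ := if j = k then p else if k < j ∧ j ≤ p then j - 1 else j

def sigma (p q k : ℕ) (hk : k < p) (hq : 1 ≤ q) : Equiv.Perm (Fin (p + q)) where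
  toFun j := ⟨g p k j, by have := j.2; unfold g; split_ifs <;> omega⟩
  invFun j := ⟨g' p k j, by have := j.2; unfold g'; split_ifs <;> omega⟩
  left_inv j := by
    apply Fin.ext; show g' p k (g p k j) = (j : ℕ)
    have := j.2; unfold g g'; split_ifs <;> omega
  right_inv j := by
    apply Fin.ext; show g p k (g' p k j) = (j : ℕ)
    have := j.2; unfold g g'; split_ifs <;> omega

lemma sigma_val (p q k : ℕ) (hk : k < p) (hq : 1 ≤ q) (j : Fin (p + q)) :
    ((sigma p q k hk hq) j : ℕ) = g p k (j : ℕ) := rfl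

lemma sigma_shuffle (p q k : ℕ) (hk : k < p) (hq : 1 ≤ q) :
    IsShuffle p q (sigma p q k hk hq) := by
  constructor
  · intro i j hij hjp
    have h1 := i.2; have h2 := j.2
    rw [Fin.lt_def] at hij ⊢
    rw [sigma_val, sigma_val]
    unfold g; split_ifs <;> omega
  · intro i j hpi hij
    have h1 := i.2; have h2 := j.2
    rw [Fin.lt_def] at hij ⊢
    rw [sigma_val, sigma_val]
    unfold g; split_ifs <;> omega

lemma sigma_unique (p q k : ℕ) (hk : k < p) (hq : 1 ≤ q) :
    ∃! j : Fin (p + q), Responsible p q (sigma p q k hk hq) j := by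
  have hpq : p < p + q := by omega
  refine ⟨⟨p, hpq⟩, ⟨le_refl _, ⟨⟨k, by omega⟩, hk, ?_⟩⟩, ?_⟩
  · rw [Fin.lt_def, sigma_val, sigma_val]
    show g p k p < g p k k
    unfold g; split_ifs <;> omega
  · rintro j ⟨hpj, i, hip, hlt⟩
    have h1 := i.2; have h2 := j.2
    rw [Fin.lt_def, sigma_val, sigma_val] at hlt
    apply Fin.ext
    show (j : ℕ) = p
    unfold g at hlt; split_ifs at hlt <;> omega

lemma eq_sigma (p q : ℕ) (hp : 1 ≤ p) (hq : 1 ≤ q) (π : Equiv.Perm (Fin (p + q)))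
    (hsh : IsShuffle p q π) (huniq : ∃! j : Fin (p + q), Responsible p q π j) :
    ∃ (k : ℕ) (hk : k < p), π = sigma p q k hk hq := by
  have hpq : p < p + q := by omega
  set P : Fin (p + q) := ⟨p, hpq⟩ with hP
  obtain ⟨j0, hr0, hu0⟩ := huniq
  -- P is responsible
  have hrespP : Responsible p q π P := by
    obtain ⟨hpj0, i, hip, hlt⟩ := hr0
    rcases eq_or_lt_of_le hpj0 with heq | hlt2
    · have hj0P : j0 = P := Fin.ext heq.symm
      rw [← hj0P]
      exact ⟨hpj0, i, hip, hlt⟩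
    · have : π P < π j0 := hsh.2 P j0 (le_refl _) (by rwa [Fin.lt_def])
      exact ⟨le_refl _, i, hip, lt_trans this hlt⟩
  have hPj0 : P = j0 := hu0 P hrespP
  -- no other index is responsible
  have hgt : ∀ j i : Fin (p + q), p < (j : ℕ) → (i : ℕ) < p → π i < π j := by
    intro j i hj hi
    rcases lt_trichotomy (π i) (π j) with h | h | h
    · exact h
    · exact absurd (π.injective h) (by rintro rfl; omega)
    · have : j = P := (hu0 j ⟨le_of_lt hj, i, hi, h⟩).trans hPj0.symm
      rw [this] at hj; simp [hP] at hj
  -- indices above p are fixed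
  have hfix : ∀ j : Fin (p + q), p < (j : ℕ) → (π j : ℕ) = (j : ℕ) := by
    intro j hj
    have h1 : univ.filter (fun t => π t < π j) = Finset.Iio j := by
      ext t
      simp only [mem_filter, mem_univ, true_and, Finset.mem_Iio]
      constructor
      · intro h
        by_contra hge
        push_neg at hge
        rcases eq_or_lt_of_le hge with heq | hlt2
        · exact absurd (heq ▸ h) (lt_irrefl _)
        · exact absurd (hsh.2 j t (le_of_lt hj) hlt2) (not_lt.2 (le_of_lt h))
      · intro h
        rcases lt_or_ge ((t : ℕ)) p with htp | htp
        · exact hgt j t hj htp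
        · exact hsh.2 t j htp h
    have h2 := card_lt π j
    rw [h1, Fin.card_Iio] at h2
    omega
  -- values of indices ≤ p are ≤ p
  have hle : ∀ i : Fin (p + q), (i : ℕ) ≤ p → (π i : ℕ) ≤ p := by
    intro i hi
    by_contra hgt2
    push_neg at hgt2
    have h1 := hfix (π i) hgt2
    have h2 : π (π i) = π i := Fin.ext h1
    have h3 : (π i : Fin (p + q)) = i := π.injective h2
    rw [h3] at hgt2
    omega
  set k : ℕ := (π P : ℕ) with hk
  have hkp : k < p := by
    obtain ⟨_, i, hip, hlt⟩ := hrespP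
    have := hle i (le_of_lt hip)
    rw [Fin.lt_def] at hlt
    omega
  -- first block values
  have hfirst : ∀ i : Fin (p + q), (i : ℕ) < p →
      (π i : ℕ) = if (i : ℕ) < k then (i : ℕ) else (i : ℕ) + 1 := by
    intro i hip
    have hne : (π i : ℕ) ≠ k := by
      intro h
      have h2 : π i = π P := Fin.ext h
      have : i = P := π.injective h2
      rw [this] at hip; simp [hP] at hip
    have h1 : univ.filter (fun t => π t < π i) =
        if k < (π i : ℕ) then insert P (Finset.Iio i) else Finset.Iio i := by
      ext t
      have ht2 := t.2
      have hlei := hle i (le_of_lt hip)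
      split_ifs with hki <;>
        simp only [mem_filter, mem_univ, true_and, Finset.mem_insert, Finset.mem_Iio]
      · constructor
        · intro h
          rcases lt_trichotomy ((t : ℕ)) p with htp | htp | htp
          · right
            by_contra hge
            rw [not_lt, Fin.le_def] at hge
            rcases eq_or_lt_of_le hge with heq | hlt2
            · exact absurd (Fin.ext heq.symm : t = i) (by rintro rfl; exact lt_irrefl _ h)
            · exact absurd (hsh.1 i t (by rwa [Fin.lt_def]) htp) (not_lt.2 (le_of_lt h))
          · left; exact Fin.ext htp
          · have := hfix t htp
            rw [Fin.lt_def] at h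
            omega
        · rintro (rfl | h)
          · rw [Fin.lt_def]; omega
          · rcases lt_or_ge ((t : ℕ)) p with htp | htp
            · exact hsh.1 t i h hip
            · rw [Fin.lt_def] at h; omega
      · push_neg at hki
        constructor
        · intro h
          rcases lt_trichotomy ((t : ℕ)) p with htp | htp | htp
          · by_contra hge
            rw [not_lt, Fin.le_def] at hge
            rcases eq_or_lt_of_le hge with heq | hlt2
            · exact absurd (Fin.ext heq.symm : t = i) (by rintro rfl; exact lt_irrefl _ h)
            · exact absurd (hsh.1 i t (by rwa [Fin.lt_def]) htp) (not_lt.2 (le_of_lt h))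
          · exfalso
            have ht : t = P := Fin.ext htp
            rw [ht, Fin.lt_def] at h
            omega
          · have := hfix t htp
            rw [Fin.lt_def] at h
            omega
        · intro h
          rcases lt_or_ge ((t : ℕ)) p with htp | htp
          · exact hsh.1 t i h hip
          · rw [Fin.lt_def] at h; omega
    have h2 := card_lt π i
    rw [h1] at h2
    split_ifs at h2 with hki
    · rw [Finset.card_insert_of_notMem (by simp [hP, Fin.lt_def]; omega),
        Fin.card_Iio] at h2
      -- π i = i + 1, and k < π i so ¬ (i < k)
      rw [if_neg (by omega)]
      omega
    · rw [Fin.card_Iio] at h2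
      push_neg at hki
      -- π i = i, π i < k (since ≠ k)
      have hik : (π i : ℕ) < k := lt_of_le_of_ne hki hne
      rw [if_pos (by omega)]
      omega
  refine ⟨k, hkp, ?_⟩
  apply Equiv.ext
  intro j
  apply Fin.ext
  rw [sigma_val]
  have hj2 := j.2
  rcases lt_trichotomy ((j : ℕ)) p with hjp | hjp | hjp
  · have := hfirst j hjp
    unfold g; split_ifs at this ⊢ <;> omega
  · have hjP : j = P := Fin.ext hjp
    rw [hjP]
    show (π P : ℕ) = g p k p
    simp [g, hk]
  · have := hfix j hjp
    unfold g; split_ifs <;> omega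

end ShuffleAux

open ShuffleAux in
theorem card_shuffles_one_inversion (p q : ℕ) (hp : 1 ≤ p) (hq : 1 ≤ q) :
    Nat.card {π : Equiv.Perm (Fin (p + q)) //
      IsShuffle p q π ∧ ∃! j : Fin (p + q), Responsible p q π j} = p := by
  have hpq : p < p + q := by omega
  set F : Fin p → {π : Equiv.Perm (Fin (p + q)) //
      IsShuffle p q π ∧ ∃! j : Fin (p + q), Responsible p q π j} :=
    fun k => ⟨sigma p q k k.2 hq, sigma_shuffle p q k k.2 hq, sigma_unique p q k k.2 hq⟩
    with hF
  have hbij : Function.Bijective F := by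
    constructor
    · intro a b hab
      have := congrArg (fun s => ((s.1 ⟨p, hpq⟩ : Fin (p + q)) : ℕ)) hab
      simp only [hF, sigma_val, g, if_pos rfl] at this
      exact Fin.ext this
    · rintro ⟨π, hsh, huniq⟩
      obtain ⟨k, hk, rfl⟩ := eq_sigma p q hp hq π hsh huniq
      exact ⟨⟨k, hk⟩, rfl⟩
  rw [← Nat.card_eq_of_bijective F hbij, Nat.card_eq_fintype_card, Fintype.card_fin]
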